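/- There exist a constant C > 0 and an integer N ≥ 1 such that for all n ≥ N (in particular λ_n > λ), ∫₀¹ ξ̃_n(x)² dx ≥ C; i.e. the L²(0,1) norms of the functions ξ̃_n are bounded below away from zero. -/

import Mathlib

open MeasureTheory Real Set

/-- The Bessel function of the first kind of order `ν ≥ 0`, defined by its power series
`J_ν(x) = ∑_{m≥0} (-1)^m / (m! Γ(m+ν+1)) (x/2)^(2m+ν)`. -/
noncomputable def besselJ (ν : ℝ) (x : ℝ) : ℝ :=
  ∑' m : ℕ, ((-1 : ℝ) ^ m / ((m.factorial : ℝ) * Real.Gamma ((m : ℝ) + ν + 1))) *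
    (x / 2) ^ (2 * (m : ℝ) + ν)

noncomputable def cJ (ν : ℝ) (m : ℕ) : ℝ :=
  (-1 : ℝ) ^ m / ((m.factorial : ℝ) * Real.Gamma ((m : ℝ) + ν + 1))

lemma gamma_ge (ν : ℝ) (hν : 0 < ν) (m : ℕ) :
    (m.factorial : ℝ) * Real.Gamma (ν + 1) ≤ Real.Gamma ((m : ℝ) + ν + 1) := by
  induction m with
  | zero => simp [Real.Gamma_pos_of_pos]
  | succ k ih =>
    have hpos : (0:ℝ) < (k:ℝ) + ν + 1 := by positivity
    have h1 : Real.Gamma (((k:ℕ)+1 : ℕ) + ν + 1) = ((k:ℝ) + ν + 1) * Real.Gamma ((k:ℝ) + ν + 1) := by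
      push_cast
      rw [show (k:ℝ) + 1 + ν + 1 = ((k:ℝ) + ν + 1) + 1 by ring, Real.Gamma_add_one hpos.ne']
    rw [h1]
    have hfk : (0:ℝ) < (k.factorial : ℝ) := by positivity
    have hg : (0:ℝ) < Real.Gamma (ν + 1) := Real.Gamma_pos_of_pos (by linarith)
    calc ((((k:ℕ)+1:ℕ)).factorial : ℝ) * Real.Gamma (ν + 1)
        = ((k:ℝ) + 1) * ((k.factorial : ℝ) * Real.Gamma (ν + 1)) := by
          rw [Nat.factorial_succ]; push_cast; ring
      _ ≤ ((k:ℝ) + ν + 1) * ((k.factorial : ℝ) * Real.Gamma (ν + 1)) := by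
          apply mul_le_mul_of_nonneg_right (by linarith) (by positivity)
      _ ≤ ((k:ℝ) + ν + 1) * Real.Gamma ((k:ℝ) + ν + 1) :=
          mul_le_mul_of_nonneg_left ih (by positivity)

lemma gamma_pos (ν : ℝ) (hν : 0 < ν) (m : ℕ) : (0:ℝ) < Real.Gamma ((m : ℝ) + ν + 1) :=
  Real.Gamma_pos_of_pos (by positivity)

lemma cJ_abs (ν : ℝ) (hν : 0 < ν) (m : ℕ) :
    |cJ ν m| = 1 / ((m.factorial : ℝ) * Real.Gamma ((m : ℝ) + ν + 1)) := by
  have h := gamma_pos ν hν m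
  rw [cJ, abs_div, abs_pow, abs_neg, abs_one, one_pow, abs_of_pos (by positivity)]

lemma cJ_bound (ν : ℝ) (hν : 0 < ν) (m : ℕ) :
    |cJ ν m| ≤ (1 / Real.Gamma (ν + 1)) / (m.factorial : ℝ) := by
  have hg : (0:ℝ) < Real.Gamma (ν + 1) := Real.Gamma_pos_of_pos (by linarith)
  have h1 := gamma_ge ν hν m
  have h2 := gamma_pos ν hν m
  have hf : (0:ℝ) < (m.factorial : ℝ) := by positivity
  rw [cJ_abs ν hν m]
  rw [div_div]
  rw [mul_comm (Real.Gamma (ν+1))]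
  apply one_div_le_one_div_of_le (by positivity)
  calc (m.factorial:ℝ) * Real.Gamma (ν+1) ≤ Real.Gamma ((m:ℝ) + ν + 1) := h1
    _ ≤ (m.factorial:ℝ) * Real.Gamma ((m:ℝ) + ν + 1) := by
        have hone : (1:ℝ) ≤ (m.factorial : ℝ) := by
          exact_mod_cast Nat.one_le_iff_ne_zero.mpr (Nat.factorial_ne_zero m)
        nlinarith

/-- master summability: `A * B^m / m!` type bounds -/
lemma summable_master (A B : ℝ) : Summable (fun m : ℕ => A * B ^ m / (m.factorial : ℝ)) := by
  have := (Real.summable_pow_div_factorial B).mul_left A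
  simpa [mul_div_assoc] using this

lemma summable_of_le_master {b : ℕ → ℝ} {A B : ℝ}
    (hb : ∀ m, |b m| ≤ A * B ^ m / (m.factorial : ℝ)) (hB : 0 ≤ B) :
    Summable b := by
  apply Summable.of_norm
  apply Summable.of_nonneg_of_le (fun m => norm_nonneg _) (fun m => ?_) (summable_master A B)
  simpa using hb m

lemma deriv_coeff_bound {b : ℕ → ℝ} {A B R : ℝ} (hB : 1 ≤ B) (hR : 1 ≤ R)
    (hb : ∀ m, |b m| ≤ A * B ^ m / (m.factorial : ℝ)) (z : ℝ) (hz : |z| ≤ R) (m : ℕ) :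
    |b m * ((m:ℝ) * z ^ (m-1))| ≤ A * (2*B*R) ^ m / (m.factorial : ℝ) := by
  have hzR : |z| ^ (m-1) ≤ R ^ (m-1) := pow_le_pow_left₀ (abs_nonneg z) hz _
  have hRm : R ^ (m-1) ≤ R ^ m := pow_le_pow_right₀ hR (Nat.sub_le m 1)
  have hm2 : (m:ℝ) ≤ 2 ^ m := by exact_mod_cast (Nat.lt_two_pow_self (n := m)).le
  have h0 : |b m * ((m:ℝ) * z ^ (m-1))| = |b m| * ((m:ℝ) * |z| ^ (m-1)) := by
    rw [abs_mul, abs_mul, abs_pow, Nat.abs_cast]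
  rw [h0]
  have hA : 0 ≤ A := le_trans (abs_nonneg _) (by simpa using hb 0)
  calc |b m| * ((m:ℝ) * |z| ^ (m-1))
      ≤ (A * B ^ m / (m.factorial : ℝ)) * ((2:ℝ)^m * R ^ m) := by
        apply mul_le_mul (hb m) ?_ (by positivity) (by positivity)
        apply mul_le_mul hm2 (le_trans hzR hRm) (by positivity) (by positivity)
    _ = A * (2*B*R) ^ m / (m.factorial : ℝ) := by rw [mul_pow, mul_pow]; ring

lemma hasDerivAt_psum {b : ℕ → ℝ} {A B : ℝ} (hB : 1 ≤ B)
    (hb : ∀ m, |b m| ≤ A * B ^ m / (m.factorial : ℝ)) (y : ℝ) :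
    HasDerivAt (fun z => ∑' m : ℕ, b m * z ^ m) (∑' m : ℕ, ((m:ℝ)+1) * b (m+1) * y ^ m) y := by
  set R := |y| + 1 with hRdef
  have hR : 1 ≤ R := by simp [hRdef]
  have hyR : y ∈ Ioo (-R) R := by
    constructor <;> [nlinarith [abs_nonneg y, neg_abs_le y]; nlinarith [le_abs_self y]]
  have key : HasDerivAt (fun z => ∑' m : ℕ, b m * z ^ m)
      (∑' m : ℕ, b m * ((m:ℝ) * y ^ (m-1))) y := by
    apply hasDerivAt_tsum_of_isPreconnected
      (u := fun m => A * (2*B*R) ^ m / (m.factorial : ℝ))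
      (summable_master _ _) isOpen_Ioo (convex_Ioo _ _).isPreconnected
      (g' := fun m z => b m * ((m:ℝ) * z ^ (m-1)))
      (fun m z _ => (hasDerivAt_pow m z).const_mul (b m))
      (fun m z hz => by
        rw [Real.norm_eq_abs]
        exact deriv_coeff_bound hB hR hb z
          (by rw [abs_le]; exact ⟨hz.1.le, hz.2.le⟩) m)
      hyR ?_ hyR
    · apply summable_of_le_master (A := A) (B := B * R) ?_ (by positivity)
      intro m
      have := hb m
      rw [abs_mul, abs_pow]
      calc |b m| * |y| ^ m ≤ (A * B ^ m / (m.factorial : ℝ)) * R ^ m := by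
            apply mul_le_mul (hb m) (pow_le_pow_left₀ (abs_nonneg _) (by simp [hRdef]) _)
              (by positivity) ?_
            have hA : 0 ≤ A := le_trans (abs_nonneg _) (by simpa using hb 0)
            positivity
        _ = A * (B * R) ^ m / (m.factorial : ℝ) := by rw [mul_pow]; ring
  convert key using 1
  have hsum : Summable (fun m : ℕ => b m * ((m:ℝ) * y ^ (m-1))) := by
    apply summable_of_le_master (A := A) (B := 2*B*R) ?_ (by positivity)
    exact fun m => deriv_coeff_bound hB hR hb y (by linarith [le_abs_self y, abs_nonneg y]) m
  rw [hsum.tsum_eq_zero_add]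
  simp only [Nat.cast_zero, zero_mul, mul_zero, zero_add]
  apply tsum_congr
  intro m
  push_cast
  ring_nf

noncomputable def bJ1 (ν : ℝ) (m : ℕ) : ℝ := ((m:ℝ)+1) * cJ ν (m+1)
noncomputable def bJ2 (ν : ℝ) (m : ℕ) : ℝ := ((m:ℝ)+1) * bJ1 ν (m+1)
noncomputable def fJ (ν y : ℝ) : ℝ := ∑' m : ℕ, cJ ν m * y ^ m
noncomputable def fJ1 (ν y : ℝ) : ℝ := ∑' m : ℕ, bJ1 ν m * y ^ m
noncomputable def fJ2 (ν y : ℝ) : ℝ := ∑' m : ℕ, bJ2 ν m * y ^ m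

lemma bound_shift {b : ℕ → ℝ} {A B : ℝ} (hB : 0 < B)
    (hb : ∀ m, |b m| ≤ A * B ^ m / (m.factorial : ℝ)) (m : ℕ) :
    |((m:ℝ)+1) * b (m+1)| ≤ (A*B) * B ^ m / (m.factorial : ℝ) := by
  have h := hb (m+1)
  have hm1 : (0:ℝ) < (m:ℝ)+1 := by positivity
  have hfac : ((m+1).factorial : ℝ) = ((m:ℝ)+1) * (m.factorial : ℝ) := by
    rw [Nat.factorial_succ]; push_cast; ring
  rw [abs_mul, abs_of_pos hm1]
  calc ((m:ℝ)+1) * |b (m+1)| ≤ ((m:ℝ)+1) * (A * B ^ (m+1) / ((m+1).factorial : ℝ)) :=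
        mul_le_mul_of_nonneg_left h hm1.le
    _ = (A*B) * B ^ m / (m.factorial : ℝ) := by
        rw [hfac, pow_succ]
        have hf : (m.factorial : ℝ) ≠ 0 := by positivity
        field_simp

lemma cJ_bound' (ν : ℝ) (hν : 0 < ν) (m : ℕ) :
    |cJ ν m| ≤ (1 / Real.Gamma (ν + 1)) * 1 ^ m / (m.factorial : ℝ) := by
  simpa using cJ_bound ν hν m

lemma bJ1_bound (ν : ℝ) (hν : 0 < ν) (m : ℕ) :
    |bJ1 ν m| ≤ (1 / Real.Gamma (ν + 1) * 1) * 1 ^ m / (m.factorial : ℝ) :=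
  bound_shift one_pos (cJ_bound' ν hν) m

lemma bJ2_bound (ν : ℝ) (hν : 0 < ν) (m : ℕ) :
    |bJ2 ν m| ≤ (1 / Real.Gamma (ν + 1) * 1 * 1) * 1 ^ m / (m.factorial : ℝ) :=
  bound_shift one_pos (bJ1_bound ν hν) m

lemma hasDerivAt_fJ (ν : ℝ) (hν : 0 < ν) (y : ℝ) : HasDerivAt (fJ ν) (fJ1 ν y) y :=
  hasDerivAt_psum le_rfl (cJ_bound' ν hν) y

lemma hasDerivAt_fJ1 (ν : ℝ) (hν : 0 < ν) (y : ℝ) : HasDerivAt (fJ1 ν) (fJ2 ν y) y :=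
  hasDerivAt_psum le_rfl (bJ1_bound ν hν) y

lemma cJ_rec (ν : ℝ) (hν : 0 < ν) (m : ℕ) :
    ((m:ℝ)+ν+1) * bJ1 ν m = - cJ ν m := by
  have hpos : (0:ℝ) < (m:ℝ) + ν + 1 := by positivity
  have hg : Real.Gamma (((m+1:ℕ):ℝ) + ν + 1) = ((m:ℝ)+ν+1) * Real.Gamma ((m:ℝ) + ν + 1) := by
    push_cast
    rw [show (m:ℝ) + 1 + ν + 1 = ((m:ℝ) + ν + 1) + 1 by ring, Real.Gamma_add_one hpos.ne']
  have hΓpos := gamma_pos ν hν m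
  have hfac : ((m+1).factorial : ℝ) = ((m:ℝ)+1) * (m.factorial : ℝ) := by
    rw [Nat.factorial_succ]; push_cast; ring
  have hf : (m.factorial : ℝ) ≠ 0 := by positivity
  rw [bJ1, cJ, cJ, hg, hfac, pow_succ]
  field_simp

lemma fJ_ode (ν : ℝ) (hν : 0 < ν) (y : ℝ) :
    y * fJ2 ν y + (ν+1) * fJ1 ν y + fJ ν y = 0 := by
  have hg : (0:ℝ) < Real.Gamma (ν+1) := Real.Gamma_pos_of_pos (by linarith)
  set A : ℝ := 1 / Real.Gamma (ν + 1) with hA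
  have hyb : |y| ≤ |y| + 1 := by linarith [abs_nonneg y]
  -- summabilities
  have s0 : Summable (fun m : ℕ => cJ ν m * y ^ m) := by
    apply summable_of_le_master (A := A) (B := |y|+1) ?_ (by positivity)
    intro m
    rw [abs_mul, abs_pow]
    calc |cJ ν m| * |y| ^ m ≤ (A * 1 ^ m / (m.factorial:ℝ)) * (|y|+1) ^ m :=
          mul_le_mul (cJ_bound' ν hν m) (pow_le_pow_left₀ (abs_nonneg _) hyb _) (by positivity)
            (by positivity)
      _ = A * (|y|+1) ^ m / (m.factorial:ℝ) := by ring
  have s1 : Summable (fun m : ℕ => bJ1 ν m * y ^ m) := by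
    apply summable_of_le_master (A := A) (B := |y|+1) ?_ (by positivity)
    intro m
    rw [abs_mul, abs_pow]
    calc |bJ1 ν m| * |y| ^ m ≤ (A * 1 ^ m / (m.factorial:ℝ)) * (|y|+1) ^ m :=
          mul_le_mul (by simpa [hA] using bJ1_bound ν hν m) (pow_le_pow_left₀ (abs_nonneg _) hyb _)
            (by positivity) (by positivity)
      _ = A * (|y|+1) ^ m / (m.factorial:ℝ) := by ring
  have sh : Summable (fun m : ℕ => (m:ℝ) * bJ1 ν m * y ^ m) := by
    apply summable_of_le_master (A := A) (B := 2*(|y|+1)) ?_ (by positivity)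
    intro m
    have hm2 : (m:ℝ) ≤ 2 ^ m := by exact_mod_cast (Nat.lt_two_pow_self (n := m)).le
    rw [abs_mul, abs_mul, abs_pow, Nat.abs_cast]
    calc (m:ℝ) * |bJ1 ν m| * |y| ^ m
        ≤ (2:ℝ)^m * (A * 1 ^ m / (m.factorial:ℝ)) * (|y|+1) ^ m := by
          apply mul_le_mul ?_ (pow_le_pow_left₀ (abs_nonneg _) hyb _) (by positivity) (by positivity)
          exact mul_le_mul hm2 (by simpa [hA] using bJ1_bound ν hν m) (abs_nonneg _) (by positivity)
      _ = A * (2*(|y|+1)) ^ m / (m.factorial:ℝ) := by rw [mul_pow]; ring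
  -- step 1 : y * fJ2 = ∑' m, m * bJ1 m * y^m
  have step1 : y * fJ2 ν y = ∑' m : ℕ, (m:ℝ) * bJ1 ν m * y ^ m := by
    rw [fJ2, ← tsum_mul_left]
    rw [sh.tsum_eq_zero_add]
    simp only [Nat.cast_zero, zero_mul, zero_add]
    apply tsum_congr
    intro m
    rw [bJ2]
    push_cast
    ring
  have step2 : (ν+1) * fJ1 ν y = ∑' m : ℕ, (ν+1) * (bJ1 ν m * y ^ m) := by
    rw [fJ1, ← tsum_mul_left]
  rw [step1, step2, fJ, ← sh.tsum_add (s1.mul_left _), ← ((sh.add (s1.mul_left _))).tsum_add s0]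
  have : ∀ m : ℕ, (m:ℝ) * bJ1 ν m * y ^ m + (ν+1) * (bJ1 ν m * y ^ m) + cJ ν m * y ^ m = 0 := by
    intro m
    have h := cJ_rec ν hν m
    linear_combination y ^ m * h
  rw [tsum_congr this]
  exact tsum_zero

noncomputable def JB (ν x : ℝ) : ℝ := (x/2) ^ ν * fJ ν (x^2/4)
noncomputable def CC (ν x : ℝ) : ℝ := ν/x * fJ ν (x^2/4) + (x/2) * fJ1 ν (x^2/4)
noncomputable def CC' (ν x : ℝ) : ℝ :=
  -(ν/x^2) * fJ ν (x^2/4) + (ν/x) * (fJ1 ν (x^2/4) * (x/2))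
    + (1/2) * fJ1 ν (x^2/4) + (x/2) * (fJ2 ν (x^2/4) * (x/2))
noncomputable def JB1 (ν x : ℝ) : ℝ := (x/2) ^ ν * CC ν x
noncomputable def JB2 (ν x : ℝ) : ℝ := (x/2) ^ ν * (ν/x * CC ν x + CC' ν x)

lemma hasDerivAt_half_rpow (ν x : ℝ) (hx : 0 < x) :
    HasDerivAt (fun x : ℝ => (x/2) ^ ν) ((x/2)^ν * (ν/x)) x := by
  have h2 : (0:ℝ) < x/2 := by linarith
  have h1 : HasDerivAt (fun z : ℝ => z ^ ν) (ν * (x/2) ^ (ν-1)) (x/2) :=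
    Real.hasDerivAt_rpow_const (Or.inl h2.ne')
  have h0 : HasDerivAt (fun x : ℝ => x/2) (1/2) x := (hasDerivAt_id x).div_const 2
  have := h1.comp x h0
  refine this.congr_deriv (Eq.symm ?_)
  rw [Real.rpow_sub h2, Real.rpow_one]
  field_simp

lemma hasDerivAt_ysq (x : ℝ) : HasDerivAt (fun x : ℝ => x^2/4) (x/2) x := by
  have := (hasDerivAt_pow 2 x).div_const 4
  refine this.congr_deriv (Eq.symm ?_)
  push_cast
  ring

lemma hasDerivAt_fJ_comp (ν : ℝ) (hν : 0 < ν) (x : ℝ) :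
    HasDerivAt (fun x : ℝ => fJ ν (x^2/4)) (fJ1 ν (x^2/4) * (x/2)) x :=
  ((hasDerivAt_fJ ν hν (x^2/4)).comp x (hasDerivAt_ysq x) :)

lemma hasDerivAt_fJ1_comp (ν : ℝ) (hν : 0 < ν) (x : ℝ) :
    HasDerivAt (fun x : ℝ => fJ1 ν (x^2/4)) (fJ2 ν (x^2/4) * (x/2)) x :=
  ((hasDerivAt_fJ1 ν hν (x^2/4)).comp x (hasDerivAt_ysq x) :)

lemma hasDerivAt_JB (ν : ℝ) (hν : 0 < ν) (x : ℝ) (hx : 0 < x) :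
    HasDerivAt (JB ν) (JB1 ν x) x := by
  have := (hasDerivAt_half_rpow ν x hx).mul (hasDerivAt_fJ_comp ν hν x)
  refine this.congr_deriv (Eq.symm ?_)
  rw [JB1, CC]
  ring

lemma hasDerivAt_CC (ν : ℝ) (hν : 0 < ν) (x : ℝ) (hx : 0 < x) :
    HasDerivAt (CC ν) (CC' ν x) x := by
  have hinv : HasDerivAt (fun x : ℝ => ν/x) (-(ν/x^2)) x := by
    simpa [div_eq_mul_inv, mul_neg] using (hasDerivAt_inv hx.ne').const_mul ν
  have h1 := hinv.mul (hasDerivAt_fJ_comp ν hν x)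
  have h2 := ((hasDerivAt_id x).div_const 2).mul (hasDerivAt_fJ1_comp ν hν x)
  have h := h1.add h2
  simp only [id_eq] at h
  refine h.congr_deriv (Eq.symm ?_)
  rw [CC']
  ring

lemma hasDerivAt_JB1 (ν : ℝ) (hν : 0 < ν) (x : ℝ) (hx : 0 < x) :
    HasDerivAt (JB1 ν) (JB2 ν x) x := by
  have := (hasDerivAt_half_rpow ν x hx).mul (hasDerivAt_CC ν hν x hx)
  refine this.congr_deriv (Eq.symm ?_)
  rw [JB2]
  ring

lemma JB_ode (ν : ℝ) (hν : 0 < ν) (x : ℝ) (hx : 0 < x) :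
    x^2 * JB2 ν x + x * JB1 ν x + (x^2 - ν^2) * JB ν x = 0 := by
  have key := fJ_ode ν hν (x^2/4)
  have hx' : x ≠ 0 := hx.ne'
  have expand : x^2 * JB2 ν x + x * JB1 ν x + (x^2 - ν^2) * JB ν x
      = (x/2)^ν * x^2 * ((x^2/4) * fJ2 ν (x^2/4) + (ν+1) * fJ1 ν (x^2/4) + fJ ν (x^2/4)) := by
    rw [JB2, JB1, JB, CC, CC']
    field_simp
    ring
  rw [expand, key, mul_zero]


lemma besselJ_eq (ν : ℝ) (hν : 0 < ν) (x : ℝ) (hx : 0 ≤ x) : besselJ ν x = JB ν x := by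
  rcases eq_or_lt_of_le hx with h | h
  · rw [besselJ, JB, ← h]
    have z1 : (0:ℝ)/2 = 0 := by norm_num
    rw [z1, Real.zero_rpow hν.ne', zero_mul]
    convert tsum_zero with m
    rw [Real.zero_rpow ((by positivity : (0:ℝ) < 2*(m:ℝ)+ν)).ne']
    ring
  · have h2 : (0:ℝ) < x/2 := by linarith
    rw [besselJ, JB]
    have hterm : ∀ m : ℕ, ((-1 : ℝ) ^ m / ((m.factorial : ℝ) * Real.Gamma ((m : ℝ) + ν + 1))) *
        (x / 2) ^ (2 * (m : ℝ) + ν) = (cJ ν m * (x^2/4) ^ m) * (x/2) ^ ν := by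
      intro m
      have e1 : (x / 2) ^ (2 * (m:ℝ)) = (x^2/4) ^ m := by
        rw [show (2 * (m:ℝ)) = ((2*m : ℕ) : ℝ) by push_cast; ring, Real.rpow_natCast, pow_mul]
        congr 1
        rw [div_pow]
        norm_num
      rw [Real.rpow_add h2, e1, cJ]
      ring
    rw [tsum_congr hterm, tsum_mul_right, fJ]
    ring

lemma continuous_fJ (ν : ℝ) (hν : 0 < ν) : Continuous (fJ ν) :=
  continuous_iff_continuousAt.mpr fun y => (hasDerivAt_fJ ν hν y).continuousAt

lemma continuous_JB (ν : ℝ) (hν : 0 < ν) : Continuous (JB ν) := by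
  apply Continuous.mul
  · have : Continuous (fun z : ℝ => z ^ ν) :=
      continuous_iff_continuousAt.mpr fun z => Real.continuousAt_rpow_const z ν (Or.inr hν.le)
    exact this.comp (continuous_id.div_const 2)
  · exact (continuous_fJ ν hν).comp ((continuous_pow 2).div_const 4)

noncomputable def GG (ν z : ℝ) : ℝ := z^2 * (JB1 ν z)^2 + (z^2 - ν^2) * (JB ν z)^2

lemma hasDerivAt_GG (ν : ℝ) (hν : 0 < ν) (z : ℝ) (hz : 0 < z) :
    HasDerivAt (GG ν) (2*z*(JB ν z)^2) z := by
  have hsq : HasDerivAt (fun z : ℝ => z^2) (2*z) z := by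
    simpa using hasDerivAt_pow 2 z
  have hJ := hasDerivAt_JB ν hν z hz
  have hJ1 := hasDerivAt_JB1 ν hν z hz
  have hJsq : HasDerivAt (fun z => (JB ν z)^2) (2 * JB ν z * JB1 ν z) z := by
    simpa using hJ.fun_pow 2
  have hJ1sq : HasDerivAt (fun z => (JB1 ν z)^2) (2 * JB1 ν z * JB2 ν z) z := by
    simpa using hJ1.fun_pow 2
  have h := (hsq.mul hJ1sq).add ((hsq.sub_const (ν^2)).mul hJsq)
  refine h.congr_deriv (Eq.symm ?_)
  have ode := JB_ode ν hν z hz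
  linear_combination (-2 * JB1 ν z) * ode

lemma GG_FTC (ν : ℝ) (hν : 0 < ν) {p q : ℝ} (hp : 0 < p) (hpq : p ≤ q) :
    ∫ t in p..q, 2*t*(JB ν t)^2 = GG ν q - GG ν p := by
  apply intervalIntegral.integral_eq_sub_of_hasDerivAt
  · intro t ht
    rw [uIcc_of_le hpq] at ht
    exact hasDerivAt_GG ν hν t (lt_of_lt_of_le hp ht.1)
  · apply Continuous.intervalIntegrable
    exact (continuous_const.mul continuous_id).mul ((continuous_JB ν hν).pow 2)

lemma deriv_besselJ (ν : ℝ) (hν : 0 < ν) (z : ℝ) (hz : 0 < z) :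
    deriv (besselJ ν) z = JB1 ν z := by
  have hev : besselJ ν =ᶠ[nhds z] JB ν := by
    filter_upwards [Ioi_mem_nhds hz] with w hw
    exact besselJ_eq ν hν w (le_of_lt hw)
  rw [hev.deriv_eq]
  exact (hasDerivAt_JB ν hν z hz).deriv

lemma JB_zero_at (ν : ℝ) (hν : 0 < ν) (z : ℝ) (hz : 0 < z) (h : besselJ ν z = 0) :
    JB ν z = 0 := by rw [← besselJ_eq ν hν z hz.le]; exact h

lemma GG_at_zero (ν : ℝ) (hν : 0 < ν) (z : ℝ) (hz : 0 < z) (h : besselJ ν z = 0) :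
    GG ν z = z^2 * (deriv (besselJ ν) z)^2 := by
  rw [GG, JB_zero_at ν hν z hz h, deriv_besselJ ν hν z hz]
  ring

set_option maxHeartbeats 1000000 in
lemma key_integral (ν κ α : ℝ) (hν : 0 < ν) (hκpos : 0 < κ) (hα1 : α < 1)
    (hκα : 2*κ - 1 = 1 - α)
    (a d j1 jm : ℝ) (hapos : 0 < a) (hdne : d ≠ 0) (hj1 : 0 < j1)
    (hj1m : j1 ≤ jm) (hjma : jm ≤ a)
    (ξf : ℝ → ℝ)
    (hξf : ∀ x : ℝ, ξf x = Real.sqrt (2 * κ) * x ^ ((1 - α) / 2) *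
      besselJ ν (a * x ^ κ) / d) :
    (GG ν jm - GG ν j1) / (a^2 * d^2) ≤ ∫ x in (0:ℝ)..1, (ξf x) ^ 2 := by
  have hjm : 0 < jm := lt_of_lt_of_le hj1 hj1m
  have hFTC : ∫ t in j1..jm, 2*t*(JB ν t)^2 = GG ν jm - GG ν j1 :=
    GG_FTC ν hν hj1 hj1m
  have hr1 : 0 < j1 / a := div_pos hj1 hapos
  have hr2 : 0 < jm / a := div_pos hjm hapos
  have hr12 : j1 / a ≤ jm / a := (div_le_div_iff_of_pos_right hapos).mpr hj1m
  have hr2le1 : jm / a ≤ 1 := (div_le_one hapos).mpr hjma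
  set x₁ : ℝ := (j1 / a) ^ (1/κ) with hx₁def
  set x₂ : ℝ := (jm / a) ^ (1/κ) with hx₂def
  have hx₁pos : 0 < x₁ := Real.rpow_pos_of_pos hr1 _
  have hx₂pos : 0 < x₂ := Real.rpow_pos_of_pos hr2 _
  have hx₁₂ : x₁ ≤ x₂ := Real.rpow_le_rpow hr1.le hr12 (by positivity)
  have hx₂1 : x₂ ≤ 1 := Real.rpow_le_one hr2.le hr2le1 (by positivity)
  have hκinv : (1/κ) * κ = 1 := by field_simp
  have hx₁κ : x₁ ^ κ = j1 / a := by
    rw [hx₁def, ← Real.rpow_mul hr1.le, hκinv, Real.rpow_one]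
  have hx₂κ : x₂ ^ κ = jm / a := by
    rw [hx₂def, ← Real.rpow_mul hr2.le, hκinv, Real.rpow_one]
  -- pointwise formula
  have hxi_formula : ∀ x : ℝ, 0 < x →
      ξf x ^ 2 = 2*κ*x^(2*κ-1)*(JB ν (a*x^κ))^2 / d^2 := by
    intro x hx
    rw [hξf x, besselJ_eq ν hν _ (by positivity : (0:ℝ) ≤ a * x^κ)]
    have hs2 : Real.sqrt (2*κ)^2 = 2*κ := Real.sq_sqrt (by positivity)
    have hxp2 : (x ^ ((1-α)/2))^2 = x^(2*κ-1) := by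
      rw [← Real.rpow_natCast (x ^ ((1-α)/2)) 2, ← Real.rpow_mul hx.le]
      rw [show (1-α)/2 * ((2:ℕ):ℝ) = 2*κ-1 by rw [hκα]; push_cast; ring]
    rw [div_pow, mul_pow, mul_pow, hs2, hxp2]
  -- continuity on [0,1]
  have hφ : Continuous (fun x : ℝ => (Real.sqrt (2*κ) * x^((1-α)/2) * JB ν (a*x^κ) / d)^2) := by
    have hc1 : Continuous (fun x : ℝ => x^((1-α)/2)) :=
      continuous_iff_continuousAt.mpr fun x =>
        Real.continuousAt_rpow_const x _ (Or.inr (by linarith))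
    have hc2 : Continuous (fun x : ℝ => x^κ) :=
      continuous_iff_continuousAt.mpr fun x =>
        Real.continuousAt_rpow_const x _ (Or.inr hκpos.le)
    exact (((continuous_const.mul hc1).mul
      ((continuous_JB ν hν).comp (continuous_const.mul hc2))).div_const d).pow 2
  have hcont : ContinuousOn (fun x => ξf x ^2) (uIcc (0:ℝ) 1) := by
    apply hφ.continuousOn.congr
    intro x hx
    rw [uIcc_of_le zero_le_one] at hx
    show ξf x ^ 2 = (Real.sqrt (2*κ) * x^((1-α)/2) * JB ν (a*x^κ) / d)^2
    rw [hξf x, besselJ_eq ν hν _ (mul_nonneg hapos.le (Real.rpow_nonneg hx.1 κ))]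
  have hII : IntervalIntegrable (fun x => ξf x^2) volume 0 1 := hcont.intervalIntegrable
  have hstepA : ∫ x in x₁..x₂, ξf x^2 ≤ ∫ x in (0:ℝ)..1, ξf x^2 :=
    intervalIntegral.integral_mono_interval hx₁pos.le hx₁₂ hx₂1
      (Filter.Eventually.of_forall fun x => sq_nonneg _) hII
  have hstepB : ∫ x in x₁..x₂, ξf x^2
      = (∫ x in x₁..x₂, 2*κ*x^(2*κ-1)*(JB ν (a*x^κ))^2) / d^2 := by
    rw [← intervalIntegral.integral_div]
    apply intervalIntegral.integral_congr
    intro x hx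
    rw [uIcc_of_le hx₁₂] at hx
    exact hxi_formula x (lt_of_lt_of_le hx₁pos hx.1)
  have hstepC : ∫ x in x₁..x₂, 2*κ*x^(2*κ-1)*(JB ν (a*x^κ))^2
      = ∫ u in (j1/a)..(jm/a), 2*u*(JB ν (a*u))^2 := by
    have hsub := intervalIntegral.integral_comp_smul_deriv (a := x₁) (b := x₂)
      (f := fun x => x^κ) (f' := fun x => κ*x^(κ-1))
      (g := fun u => 2*u*(JB ν (a*u))^2)
      (fun x hx => by
        have hxpos : 0 < x := by
          rw [uIcc_of_le hx₁₂] at hx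
          exact lt_of_lt_of_le hx₁pos hx.1
        simpa [mul_comm] using Real.hasDerivAt_rpow_const (x := x) (p := κ) (Or.inl hxpos.ne'))
      (by
        intro x hx
        have hxpos : 0 < x := by
          rw [uIcc_of_le hx₁₂] at hx
          exact lt_of_lt_of_le hx₁pos hx.1
        exact (continuousAt_const.mul
          (Real.continuousAt_rpow_const x _ (Or.inl hxpos.ne'))).continuousWithinAt)
      (by
        have hc2 : Continuous (fun u : ℝ => JB ν (a*u)) :=
          (continuous_JB ν hν).comp (continuous_const.mul continuous_id)
        exact (continuous_const.mul continuous_id).mul (hc2.pow 2))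
    simp only [Function.comp] at hsub
    rw [hx₁κ, hx₂κ] at hsub
    rw [← hsub]
    apply intervalIntegral.integral_congr
    intro x hx
    have hxpos : 0 < x := by
      rw [uIcc_of_le hx₁₂] at hx
      exact lt_of_lt_of_le hx₁pos hx.1
    have hxx : x^(κ-1) * x^κ = x^(2*κ-1) := by
      rw [← Real.rpow_add hxpos]
      congr 1
      ring
    simp only [smul_eq_mul]
    rw [← hxx]
    ring
  have hstepD : ∫ u in (j1/a)..(jm/a), 2*u*(JB ν (a*u))^2
      = (GG ν jm - GG ν j1) / a^2 := by
    have e : ∀ u : ℝ, 2*u*(JB ν (a*u))^2 = (1/a) * (2*(a*u)*(JB ν (a*u))^2) := by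
      intro u
      field_simp
    simp_rw [e]
    rw [intervalIntegral.integral_const_mul,
      intervalIntegral.integral_comp_mul_left (fun t => 2*t*(JB ν t)^2) hapos.ne']
    rw [show a * (j1/a) = j1 by field_simp, show a * (jm/a) = jm by field_simp]
    rw [hFTC, smul_eq_mul]
    field_simp
  have hval : ∫ x in x₁..x₂, ξf x^2 = (GG ν jm - GG ν j1) / (a^2 * d^2) := by
    rw [hstepB, hstepC, hstepD, div_div]
  linarith only [hstepA, hval.le, hval.ge]

lemma aux_le_of_sq {u v : ℝ} (hu : 0 ≤ u) (hv : 0 ≤ v) (h : u^2 ≤ v^2) : u ≤ v := by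
  nlinarith

lemma aux_jm_sq {jm jn L : ℝ} (h2 : 0 < jm) (hg : jm + 2 ≤ jn) (hL : L ≤ jn - 1) :
    jm^2 ≤ jn^2 - L := by nlinarith

lemma aux_sq_low {c w v : ℝ} (hc : 0 ≤ c) (hw : 0 < w) (h : c/Real.sqrt w ≤ |v|) :
    c^2/w ≤ v^2 := by
  have h1 : (c/Real.sqrt w)^2 ≤ |v|^2 := pow_le_pow_left₀ (by positivity) h 2
  rwa [div_pow, Real.sq_sqrt hw.le, sq_abs] at h1

lemma aux_sq_hi {c w v : ℝ} (hw : 0 < w) (h : |v| ≤ c/Real.sqrt w) : v^2 ≤ c^2/w := by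
  have h1 : |v|^2 ≤ (c/Real.sqrt w)^2 := pow_le_pow_left₀ (abs_nonneg v) h 2
  rwa [div_pow, Real.sq_sqrt hw.le, sq_abs] at h1

lemma aux_lam_lt {lam κ r : ℝ} (hlam : 0 < lam) (hκ : 0 < κ)
    (h : Real.sqrt lam/κ + 1 ≤ r) : lam < (κ*r)^2 := by
  have h0 := Real.sqrt_nonneg lam
  have h1 := Real.sq_sqrt hlam.le
  have h2 : Real.sqrt lam + κ ≤ κ * r := by
    have h3 : κ * (Real.sqrt lam/κ + 1) = Real.sqrt lam + κ := by field_simp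
    calc Real.sqrt lam + κ = κ * (Real.sqrt lam/κ + 1) := h3.symm
      _ ≤ κ * r := mul_le_mul_of_nonneg_left h hκ.le
  nlinarith [h2, h0, h1, hκ]

set_option maxHeartbeats 2000000 in
/-- There exist `C > 0` and `N ≥ 1` such that for every `n ≥ N` (in particular `λ_n > λ`),
`∫₀¹ ξ̃_n(x)² dx ≥ C`; the `L²(0,1)` norms of the `ξ̃_n` are bounded below away from zero. -/
theorem stmt_18 (α ν κ : ℝ) (hα : α ∈ Set.Ioo (0:ℝ) 1)
    (hν : ν = (1 - α) / (2 - α)) (hκ : κ = (2 - α) / 2)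
    (j : ℕ → ℝ)
    (hjpos : ∀ n, 1 ≤ n → 0 < j n)
    (hjmono : ∀ m n, 1 ≤ m → m < n → j m < j n)
    (hjzero : ∀ n, 1 ≤ n → besselJ ν (j n) = 0)
    (hjtop : Filter.Tendsto j Filter.atTop Filter.atTop)
    (hasym : ∃ C : ℝ, ∀ n : ℕ, 1 ≤ n →
      |j n - Real.pi * ((n : ℝ) + ν / 2 - 1 / 4)| ≤ C / (n : ℝ))
    (hder : ∃ c₁ > (0:ℝ), ∃ c₂ > (0:ℝ), ∀ n, 1 ≤ n →
      c₁ / Real.sqrt (j n) ≤ |deriv (besselJ ν) (j n)| ∧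
      |deriv (besselJ ν) (j n)| ≤ c₂ / Real.sqrt (j n))
    (ev : ℕ → ℝ) (hev : ∀ n, ev n = (κ * j n) ^ 2)
    (lam : ℝ) (hlam : 0 < lam)
    (hnr1 : ∀ n, 1 ≤ n → lam ≠ ev n)
    (hnr2 : ∀ n k, 1 ≤ n → 1 ≤ k → lam - ev n ≠ ev k)
    (ξ : ℕ → ℝ → ℝ)
    (hξ : ∀ n x, ξ n x = Real.sqrt (2 * κ) * x ^ ((1 - α) / 2) *
      besselJ ν ((Real.sqrt (ev n - lam) / κ) * x ^ κ) / deriv (besselJ ν) (j n)) :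
    ∃ C > (0:ℝ), ∃ N : ℕ, 1 ≤ N ∧ ∀ n, N ≤ n →
      lam < ev n ∧ C ≤ ∫ x in (0:ℝ)..1, (ξ n x) ^ 2 := by
  obtain ⟨hα0, hα1⟩ := hα
  have hκpos : 0 < κ := by rw [hκ]; linarith
  have hνpos : 0 < ν := by rw [hν]; apply div_pos <;> linarith
  have hκα : 2*κ - 1 = 1 - α := by rw [hκ]; ring
  obtain ⟨Ca, hasymp⟩ := hasym
  obtain ⟨c₁, hc₁, c₂, hc₂, hd⟩ := hder
  have hj1 : 0 < j 1 := hjpos 1 le_rfl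
  -- threshold on j n
  set T : ℝ := (Real.sqrt lam/κ + 1) + (lam/κ^2 + 1) + 10 + (2*c₂^2*(j 1)/c₁^2 + 10) with hT
  obtain ⟨N₁, hN₁⟩ := (hjtop.eventually_ge_atTop T).exists_forall_of_atTop
  set N₂ : ℕ := ⌈2*|Ca|⌉₊ + 3 with hN₂def
  refine ⟨c₁^2/(4*c₂^2), by positivity, max N₁ N₂, le_trans (by norm_num [hN₂def]) (le_max_right _ _), ?_⟩
  intro n hn
  have hnN₁ : N₁ ≤ n := le_trans (le_max_left _ _) hn
  have hnN₂ : N₂ ≤ n := le_trans (le_max_right _ _) hn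
  have hn3 : 3 ≤ n := le_trans (by norm_num [hN₂def]) hnN₂
  have hn1 : 1 ≤ n := by omega
  set m := n - 1 with hmdef
  have hm1 : 1 ≤ m := by omega
  have hmn : m < n := by omega
  have hmcast : (m:ℝ) = (n:ℝ) - 1 := by
    rw [hmdef]; push_cast [Nat.cast_sub hn1]; ring
  have hjm : 0 < j m := hjpos m hm1
  have hjn : 0 < j n := hjpos n hn1
  have hjT : T ≤ j n := hN₁ n hnN₁
  have hsqlam : Real.sqrt lam ^ 2 = lam := Real.sq_sqrt hlam.le
  have hsqlam0 : 0 ≤ Real.sqrt lam := Real.sqrt_nonneg lam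
  have hTj : Real.sqrt lam/κ + 1 ≤ j n := by
    have h2 : (0:ℝ) ≤ lam/κ^2 + 1 := by positivity
    have h3 : (0:ℝ) ≤ 2*c₂^2*(j 1)/c₁^2 + 10 := by positivity
    calc Real.sqrt lam/κ + 1 ≤ T := by rw [hT]; linarith
      _ ≤ j n := hjT
  have hTj2 : lam/κ^2 + 1 ≤ j n := by
    have h1 : (0:ℝ) ≤ Real.sqrt lam/κ + 1 := by positivity
    have h3 : (0:ℝ) ≤ 2*c₂^2*(j 1)/c₁^2 + 10 := by positivity
    calc lam/κ^2 + 1 ≤ T := by rw [hT]; linarith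
      _ ≤ j n := hjT
  have hTj3 : (10:ℝ) ≤ j n := by
    have h1 : (0:ℝ) ≤ Real.sqrt lam/κ + 1 := by positivity
    have h2 : (0:ℝ) ≤ lam/κ^2 + 1 := by positivity
    have h3 : (0:ℝ) ≤ 2*c₂^2*(j 1)/c₁^2 + 10 := by positivity
    calc (10:ℝ) ≤ T := by rw [hT]; linarith
      _ ≤ j n := hjT
  have hTj4 : 2*c₂^2*(j 1)/c₁^2 + 10 ≤ j n := by
    have h1 : (0:ℝ) ≤ Real.sqrt lam/κ + 1 := by positivity
    have h2 : (0:ℝ) ≤ lam/κ^2 + 1 := by positivity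
    calc 2*c₂^2*(j 1)/c₁^2 + 10 ≤ T := by rw [hT]; linarith
      _ ≤ j n := hjT
  -- lam < ev n
  have hlamev : lam < ev n := by
    rw [hev n]
    exact aux_lam_lt hlam hκpos hTj
  refine ⟨hlamev, ?_⟩
  -- gap estimates
  have hgap : j m + 2 ≤ j n ∧ j n ≤ j m + 5 := by
    have hAn := hasymp n hn1
    have hAm := hasymp m hm1
    rw [abs_le] at hAn hAm
    have hnR : (2*|Ca| + 3 : ℝ) ≤ (n:ℝ) := by
      have : ((N₂:ℕ):ℝ) ≤ (n:ℝ) := by exact_mod_cast hnN₂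
      rw [hN₂def] at this
      push_cast at this
      have := Nat.le_ceil (2*|Ca|)
      linarith [Nat.le_ceil (2*|Ca|)]
    have hmR : (2*|Ca| + 2 : ℝ) ≤ (m:ℝ) := by rw [hmcast]; linarith
    have habs : 0 ≤ |Ca| := abs_nonneg Ca
    have hCan : Ca / (n:ℝ) ≤ 1/2 ∧ -(1/2) ≤ Ca / (n:ℝ) := by
      have hnpos : (0:ℝ) < (n:ℝ) := by linarith
      constructor
      · rw [div_le_iff₀ hnpos]
        calc Ca ≤ |Ca| := le_abs_self Ca
          _ ≤ 1/2 * (2*|Ca|+3) := by linarith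
          _ ≤ 1/2 * (n:ℝ) := by linarith
      · rw [le_div_iff₀ hnpos, neg_mul]
        rw [neg_le]
        calc -Ca ≤ |Ca| := neg_le_abs Ca
          _ ≤ 1/2 * (2*|Ca|+3) := by linarith
          _ ≤ 1/2 * (n:ℝ) := by linarith
    have hCam : Ca / (m:ℝ) ≤ 1/2 ∧ -(1/2) ≤ Ca / (m:ℝ) := by
      have hmpos : (0:ℝ) < (m:ℝ) := by linarith
      constructor
      · rw [div_le_iff₀ hmpos]
        calc Ca ≤ |Ca| := le_abs_self Ca
          _ ≤ 1/2 * (2*|Ca|+2) := by linarith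
          _ ≤ 1/2 * (m:ℝ) := by linarith
      · rw [le_div_iff₀ hmpos, neg_mul]
        rw [neg_le]
        calc -Ca ≤ |Ca| := neg_le_abs Ca
          _ ≤ 1/2 * (2*|Ca|+2) := by linarith
          _ ≤ 1/2 * (m:ℝ) := by linarith
    have hpi1 : (3:ℝ) < Real.pi := Real.pi_gt_three
    have hpi2 : Real.pi < 3.15 := by linarith [Real.pi_lt_d2]
    have hπnm : Real.pi * ((n:ℝ) + ν/2 - 1/4) - Real.pi * ((m:ℝ) + ν/2 - 1/4) = Real.pi := by
      rw [hmcast]; ring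
    constructor
    · linarith [hAn.1, hAn.2, hAm.1, hAm.2, hCan.1, hCan.2, hCam.1, hCam.2, hπnm]
    · linarith [hAn.1, hAn.2, hAm.1, hAm.2, hCan.1, hCan.2, hCam.1, hCam.2, hπnm]
  obtain ⟨hgap1, hgap2⟩ := hgap
  set a : ℝ := Real.sqrt (ev n - lam) / κ with hadef
  set d : ℝ := deriv (besselJ ν) (j n) with hddef
  have hevlam : 0 < ev n - lam := by linarith only [hlamev]
  have hapos : 0 < a := div_pos (Real.sqrt_pos.mpr hevlam) hκpos
  have hasq : a^2 = (j n)^2 - lam/κ^2 := by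
    rw [hadef, div_pow, Real.sq_sqrt hevlam.le, hev n]
    field_simp
  have haj : a ≤ j n := by
    apply aux_le_of_sq hapos.le hjn.le
    rw [hasq]
    have h0 : 0 < lam/κ^2 := by positivity
    linarith only [h0]
  have hjma : j m ≤ a := by
    apply aux_le_of_sq hjm.le hapos.le
    rw [hasq]
    exact aux_jm_sq hjm hgap1 (by linarith only [hTj2])
  have hj1m : j 1 ≤ j m := by
    rcases eq_or_lt_of_le hm1 with h | h
    · rw [← h]
    · exact (hjmono 1 m le_rfl h).le
  obtain ⟨hdn1, hdn2⟩ := hd n hn1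
  obtain ⟨hdm1, hdm2⟩ := hd m hm1
  obtain ⟨hd11, hd12⟩ := hd 1 le_rfl
  have hdsq_low : c₁^2/(j n) ≤ d^2 := aux_sq_low hc₁.le hjn hdn1
  have hdsq_hi : d^2 ≤ c₂^2/(j n) := aux_sq_hi hjn hdn2
  have hdpos : 0 < d^2 := lt_of_lt_of_le (by positivity) hdsq_low
  have hdne : d ≠ 0 := fun h => by simp [h] at hdpos
  have hGGm : c₁^2 * j m ≤ GG ν (j m) := by
    rw [GG_at_zero ν hνpos (j m) hjm (hjzero m hm1)]
    have h1 : c₁^2/(j m) ≤ (deriv (besselJ ν) (j m))^2 := aux_sq_low hc₁.le hjm hdm1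
    calc c₁^2 * j m = (j m)^2 * (c₁^2/(j m)) := by field_simp
      _ ≤ (j m)^2 * (deriv (besselJ ν) (j m))^2 := mul_le_mul_of_nonneg_left h1 (by positivity)
  have hGG1 : GG ν (j 1) ≤ c₂^2 * j 1 := by
    rw [GG_at_zero ν hνpos (j 1) hj1 (hjzero 1 le_rfl)]
    have h1 : (deriv (besselJ ν) (j 1))^2 ≤ c₂^2/(j 1) := aux_sq_hi hj1 hd12
    calc (j 1)^2 * (deriv (besselJ ν) (j 1))^2 ≤ (j 1)^2 * (c₂^2/(j 1)) :=
          mul_le_mul_of_nonneg_left h1 (by positivity)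
      _ = c₂^2 * j 1 := by field_simp
  have key : (GG ν (j m) - GG ν (j 1)) / (a^2 * d^2) ≤ ∫ x in (0:ℝ)..1, (ξ n x)^2 :=
    key_integral ν κ α hνpos hκpos hα1 hκα a d (j 1) (j m) hapos hdne hj1 hj1m hjma
      (ξ n) (fun x => hξ n x)
  have h5 : 2*c₂^2*(j 1) ≤ c₁^2 * j m := by
    have h1 : 2*c₂^2*(j 1)/c₁^2 ≤ j m := by linarith only [hTj4, hgap2]
    have h2 := (div_le_iff₀ (show (0:ℝ) < c₁^2 by positivity)).mp h1
    linarith only [h2]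
  have h3 : j n / 2 ≤ j m := by linarith only [hgap2, hTj3]
  have h4 : c₁^2 * (j n/2) ≤ c₁^2 * j m := mul_le_mul_of_nonneg_left h3 (by positivity)
  have hnum : (c₁^2/4) * j n ≤ GG ν (j m) - GG ν (j 1) := by
    linarith only [hGGm, hGG1, h5, h4]
  have ha2 : a^2 ≤ (j n)^2 := pow_le_pow_left₀ hapos.le haj 2
  have hden : a^2*d^2 ≤ c₂^2 * j n := by
    calc a^2*d^2 ≤ (j n)^2 * (c₂^2/(j n)) := mul_le_mul ha2 hdsq_hi hdpos.le (by positivity)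
      _ = c₂^2 * j n := by field_simp
  have hdenpos : 0 < a^2*d^2 := mul_pos (by positivity) hdpos
  have h0 : (0:ℝ) ≤ (c₁^2/4) * j n := by positivity
  have heq : c₁^2/(4*c₂^2) = ((c₁^2/4) * j n) / (c₂^2 * j n) := by
    rw [div_eq_div_iff (by positivity) (by positivity)]
    ring
  have hfinal : c₁^2/(4*c₂^2) ≤ ∫ x in (0:ℝ)..1, (ξ n x)^2 := by
    rw [heq]
    calc ((c₁^2/4) * j n) / (c₂^2 * j n)
        ≤ (GG ν (j m) - GG ν (j 1))/(a^2*d^2) :=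
          div_le_div₀ (by linarith only [hnum, h0]) hnum hdenpos hden
      _ ≤ ∫ x in (0:ℝ)..1, (ξ n x)^2 := key
  exact hfinal
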